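/- Let X be a Hausdorff complex topological vector space with 2 ≤ dim X < ∞. Then X supports no diskcyclic strongly continuous semigroup: for every C₀-semigroup (T_t)_{t ≥ 0} on X and every x ∈ X, the disk orbit {α T_t x : α ∈ 𝔻, t ≥ 0} is not dense in X. -/

import Mathlib

open scoped NNReal
set_option maxHeartbeats 1000000
open Module

/-- A commuting family of endomorphisms of a nontrivial finite-dimensional complex
vector space has a common eigenvector. -/
lemma exists_common_eig {V : Type*} [AddCommGroup V] [Module ℂ V] [FiniteDimensional ℂ V]
    [Nontrivial V] (f : ℝ≥0 → Module.End ℂ V) (hcomm : ∀ s t, f s * f t = f t * f s) :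
    ∃ v : V, v ≠ 0 ∧ ∀ t, ∃ a : ℂ, f t v = a • v := by
  classical
  set P : Set (Submodule ℂ V) := {E | E ≠ ⊥ ∧ ∀ t, ∀ v ∈ E, f t v ∈ E} with hP
  have htop : (⊤ : Submodule ℂ V) ∈ P := by
    refine ⟨fun h => ?_, fun _ _ _ => trivial⟩
    obtain ⟨x, hx⟩ := exists_ne (0 : V)
    exact hx (by simpa using (h ▸ Submodule.mem_top : x ∈ (⊥ : Submodule ℂ V)))
  set N : Set ℕ := (fun E : Submodule ℂ V => finrank ℂ E) '' P with hN
  have hNne : N.Nonempty := ⟨_, ⟨⊤, htop, rfl⟩⟩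
  obtain ⟨E, hEP, hEr⟩ : ∃ E ∈ P, finrank ℂ E = sInf N := by
    obtain ⟨E, hEP, h⟩ := Nat.sInf_mem hNne
    exact ⟨E, hEP, h⟩
  obtain ⟨v, hvE, hv0⟩ := Submodule.exists_mem_ne_zero_of_ne_bot hEP.1
  refine ⟨v, hv0, fun t => ?_⟩
  haveI : Nontrivial ↥E := Submodule.nontrivial_iff_ne_bot.2 hEP.1
  have hrest : ∀ w ∈ E, f t w ∈ E := hEP.2 t
  set g : Module.End ℂ ↥E := (f t).restrict hrest with hg
  obtain ⟨c, hc⟩ := Module.End.exists_eigenvalue g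
  obtain ⟨w, hw⟩ := hc.exists_hasEigenvector
  set E' : Submodule ℂ V := E ⊓ Module.End.eigenspace (f t) c with hE'
  have hweig : f t (w : V) = c • (w : V) := by
    have := hw.apply_eq_smul
    have h2 : ((g w : ↥E) : V) = f t (w : V) := rfl
    rw [this] at h2
    simpa using h2.symm
  have hwE' : (w : V) ∈ E' := by
    rw [hE']
    exact Submodule.mem_inf.2 ⟨w.2, Module.End.mem_eigenspace_iff.2 hweig⟩
  have hE'P : E' ∈ P := by
    constructor
    · intro hbot
      rw [hbot] at hwE'
      have : (w : V) = 0 := by simpa using hwE'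
      exact hw.2 (by exact_mod_cast this)
    · intro s u hu
      rw [hE'] at hu ⊢
      obtain ⟨hu1, hu2⟩ := Submodule.mem_inf.1 hu
      refine Submodule.mem_inf.2 ⟨hEP.2 s u hu1, Module.End.mem_eigenspace_iff.2 ?_⟩
      have h1 : f t (f s u) = f s (f t u) := by
        have := hcomm t s
        exact congrFun (congrArg (fun (h : Module.End ℂ V) => (h : V → V)) this) u
      rw [h1, Module.End.mem_eigenspace_iff.1 hu2, map_smul]
  have hle : E' ≤ E := inf_le_left
  have hEE' : E' = E := by
    apply Submodule.eq_of_le_of_finrank_le hle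
    rw [hEr]
    exact Nat.sInf_le ⟨E', hE'P, rfl⟩
  have hv' : v ∈ E' := hEE'.symm ▸ hvE
  rw [hE'] at hv'
  exact ⟨c, Module.End.mem_eigenspace_iff.1 (Submodule.mem_inf.1 hv').2⟩

lemma exists_two_functionals {X : Type*} [AddCommGroup X] [Module ℂ X]
    [FiniteDimensional ℂ X] (hdim : 2 ≤ Module.finrank ℂ X)
    (T : ℝ≥0 → X →ₗ[ℂ] X)
    (hTadd : ∀ t s : ℝ≥0, T (t + s) = T t ∘ₗ T s) :
    ∃ (φ1 φ2 : Module.Dual ℂ X), φ1 ≠ 0 ∧ φ2 ∉ (ℂ ∙ φ1) ∧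
      (∀ t, ∃ a : ℂ, ∀ y, φ1 (T t y) = a * φ1 y) ∧
      (∀ t, ∃ b c : ℂ, ∀ y, φ2 (T t y) = b * φ2 y + c * φ1 y) := by
  classical
  set S : ℝ≥0 → Module.End ℂ (Module.Dual ℂ X) :=
    fun t => (T t).dualMap with hS
  have hSapp : ∀ t (φ : Module.Dual ℂ X) (y : X), S t φ y = φ (T t y) := fun _ _ _ => rfl
  have hSsemi : ∀ s t, S s * S t = S (t + s) := by
    intro s t
    ext φ y
    simp only [Module.End.mul_apply, hSapp, hTadd t s, LinearMap.comp_apply]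
  have hScomm : ∀ s t, S s * S t = S t * S s := by
    intro s t; rw [hSsemi, hSsemi, add_comm]
  have hfr : Module.finrank ℂ (Module.Dual ℂ X) = Module.finrank ℂ X :=
    Subspace.dual_finrank_eq
  haveI : Nontrivial (Module.Dual ℂ X) :=
    Module.nontrivial_of_finrank_pos (R := ℂ) (by omega)
  obtain ⟨φ1, hφ1ne, hφ1⟩ := exists_common_eig S hScomm
  set p : Submodule ℂ (Module.Dual ℂ X) := ℂ ∙ φ1 with hp
  have hinv : ∀ t, p ≤ p.comap (S t) := by
    intro t ψ hψ
    obtain ⟨r, rfl⟩ := Submodule.mem_span_singleton.1 hψ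
    obtain ⟨a, ha⟩ := hφ1 t
    refine Submodule.mem_comap.2 (Submodule.mem_span_singleton.2 ⟨r * a, ?_⟩)
    rw [map_smul, ha, smul_smul]
  set f' : ℝ≥0 → Module.End ℂ (Module.Dual ℂ X ⧸ p) :=
    fun t => p.mapQ p (S t) (hinv t) with hf'
  have hpne : p ≠ ⊤ := by
    intro h
    have h1 : Module.finrank ℂ p = 1 := finrank_span_singleton hφ1ne
    rw [h] at h1
    rw [finrank_top] at h1
    omega
  haveI : Nontrivial (Module.Dual ℂ X ⧸ p) :=
    Submodule.Quotient.nontrivial_iff.2 hpne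
  have hf'comm : ∀ s t, f' s * f' t = f' t * f' s := by
    intro s t
    apply LinearMap.ext
    intro z
    obtain ⟨ψ, rfl⟩ := Submodule.Quotient.mk_surjective p z
    have h2 : S s (S t ψ) = S t (S s ψ) := by
      have := DFunLike.congr_fun (hScomm s t) ψ
      simpa [Module.End.mul_apply] using this
    simp only [Module.End.mul_apply, hf', Submodule.mapQ_apply, h2]
  obtain ⟨w, hwne, hw⟩ := exists_common_eig f' hf'comm
  obtain ⟨φ2, rfl⟩ := Submodule.Quotient.mk_surjective p w
  have hφ2p : φ2 ∉ p := fun h => hwne ((Submodule.Quotient.mk_eq_zero p).2 h)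
  refine ⟨φ1, φ2, hφ1ne, hφ2p, ?_, ?_⟩
  · intro t
    obtain ⟨a, ha⟩ := hφ1 t
    exact ⟨a, fun y => by rw [← hSapp, ha]; simp⟩
  · intro t
    obtain ⟨b, hb⟩ := hw t
    rw [Submodule.mapQ_apply, ← Submodule.Quotient.mk_smul, Submodule.Quotient.eq] at hb
    obtain ⟨c, hc⟩ := Submodule.mem_span_singleton.1 hb
    refine ⟨b, c, fun y => ?_⟩
    have := congrFun (congrArg (fun (ψ : Module.Dual ℂ X) => (ψ : X → ℂ)) hc) y
    simp only [LinearMap.sub_apply, LinearMap.smul_apply, smul_eq_mul] at this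
    rw [← hSapp]
    have h2 := sub_eq_iff_eq_add.1 this.symm
    rw [h2]
    ring

/-- A continuous additive function `ℝ≥0 → ℂ` is linear. -/
lemma additive_linear (f : ℝ≥0 → ℂ) (hc : Continuous f)
    (ha : ∀ s t, f (s + t) = f s + f t) :
    ∀ t : ℝ≥0, f t = ((t : ℝ) : ℂ) * f 1 := by
  have hf0 : f 0 = 0 := by
    have := ha 0 0
    simp only [add_zero] at this
    linear_combination -this
  set F : ℝ → ℂ := fun x => f (Real.toNNReal x) - f (Real.toNNReal (-x)) with hF
  have hm : ∀ z : ℝ, max z 0 - max (-z) 0 = z := by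
    intro z
    rcases le_total 0 z with h | h
    · rw [max_eq_left h, max_eq_right (by linarith)]; ring
    · rw [max_eq_right h, max_eq_left (by linarith)]; ring
  have hFadd : ∀ x y : ℝ, F (x + y) = F x + F y := by
    intro x y
    have key : Real.toNNReal (x + y) + (Real.toNNReal (-x) + Real.toNNReal (-y)) =
        (Real.toNNReal x + Real.toNNReal y) + Real.toNNReal (-(x + y)) := by
      apply NNReal.coe_injective
      push_cast
      simp only [Real.coe_toNNReal']
      linarith [hm (x + y), hm x, hm y]
    have h2 := congrArg f key
    rw [ha, ha, ha, ha] at h2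
    simp only [hF]
    linear_combination h2
  have hFc : Continuous F := by
    apply Continuous.sub
    · exact hc.comp continuous_real_toNNReal
    · exact hc.comp (continuous_real_toNNReal.comp continuous_neg)
  set F' : ℝ →+ ℂ := AddMonoidHom.mk' F hFadd with hF'
  have hlin : ∀ x : ℝ, F x = x • F 1 := by
    intro x
    have h := map_smul (F'.toRealLinearMap hFc) x (1 : ℝ)
    simp only [smul_eq_mul, mul_one, AddMonoidHom.coe_toRealLinearMap] at h
    exact h
  have h1 : ∀ s : ℝ≥0, F (s : ℝ) = f s := by
    intro s
    have hneg : Real.toNNReal (-(s : ℝ)) = 0 := Real.toNNReal_of_nonpos (neg_nonpos.2 s.2)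
    simp only [hF, Real.toNNReal_coe, hneg, hf0, sub_zero]
  have h2 : F 1 = f 1 := by rw [← NNReal.coe_one, h1]
  intro t
  rw [← h1 t, hlin, h2, Complex.real_smul]

/-- A continuous multiplicative function `ℝ≥0 → ℂ` with value 1 at 0 never vanishes. -/
lemma mult_ne_zero (P : ℝ≥0 → ℂ) (hc : Continuous P) (h0 : P 0 = 1)
    (hm : ∀ s t, P (s + t) = P s * P t) : ∀ t, P t ≠ 0 := by
  intro t ht
  have key : ∀ n : ℕ, P (t / 2 ^ n) = 0 := by
    intro n
    induction n with
    | zero => simpa using ht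
    | succ n ih =>
      have hsplit : t / 2 ^ n = t / 2 ^ (n + 1) + t / 2 ^ (n + 1) := by
        field_simp
        ring
      rw [hsplit, hm] at ih
      exact mul_self_eq_zero.1 ih
  have hlim : Filter.Tendsto (fun n : ℕ => t / 2 ^ n) Filter.atTop (nhds 0) := by
    have h1 : Filter.Tendsto (fun n : ℕ => ((1 : ℝ≥0) / 2) ^ n) Filter.atTop (nhds 0) :=
      NNReal.tendsto_pow_atTop_nhds_zero_of_lt_one (NNReal.coe_lt_coe.mp (by norm_num))
    have h2 := h1.const_mul t
    simp only [mul_zero] at h2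
    have heq : ∀ n : ℕ, t / 2 ^ n = t * ((1 : ℝ≥0) / 2) ^ n := by
      intro n
      simp [div_eq_mul_inv, one_div, inv_pow]
    simp only [heq]
    exact h2
  have h2 : Filter.Tendsto (fun n : ℕ => P (t / 2 ^ n)) Filter.atTop (nhds 1) := by
    rw [← h0]
    exact (hc.tendsto 0).comp hlim
  have h3 : Filter.Tendsto (fun _ : ℕ => (0 : ℂ)) Filter.atTop (nhds 1) := by
    simpa only [key] using h2
  have := tendsto_nhds_unique h3 tendsto_const_nhds
  exact one_ne_zero this

/-- A Hausdorff complex topological vector space `X` with `2 ≤ dim X < ∞` supports no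
diskcyclic strongly continuous semigroup of operators. -/
theorem stmt_12 {X : Type*} [AddCommGroup X] [Module ℂ X] [TopologicalSpace X]
    [IsTopologicalAddGroup X] [ContinuousSMul ℂ X] [T2Space X]
    [FiniteDimensional ℂ X] (hdim : 2 ≤ Module.finrank ℂ X)
    (T : ℝ≥0 → X →L[ℂ] X)
    (hT0 : T 0 = ContinuousLinearMap.id ℂ X)
    (hTadd : ∀ t s : ℝ≥0, T (t + s) = T t ∘L T s)
    (hTcont : ∀ x : X, Continuous fun t : ℝ≥0 => T t x) :
    ∀ x : X, ¬ Dense {y : X | ∃ α : ℂ, ‖α‖ ≤ 1 ∧ ∃ t : ℝ≥0, y = α • T t x} := by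
  intro x hD
  obtain ⟨φ1, φ2, hφ1ne, hφ2p, H1, H2⟩ :=
    exists_two_functionals hdim (fun t => (T t).toLinearMap)
      (fun t s => by simp only [hTadd t s]; rfl)
  simp only [ContinuousLinearMap.coe_coe] at H1 H2
  have hφ1c : Continuous φ1 := LinearMap.continuous_of_finiteDimensional φ1
  have hφ2c : Continuous φ2 := LinearMap.continuous_of_finiteDimensional φ2
  -- construct y0, y1 with φ1 y0 = 1, φ2 y0 = 0, φ1 y1 = 0, φ2 y1 = 1
  obtain ⟨w1, hw1⟩ : ∃ w, φ1 w ≠ 0 := by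
    by_contra h
    push_neg at h
    exact hφ1ne (LinearMap.ext fun y => by simpa using h y)
  have hz1 : φ1 ((φ1 w1)⁻¹ • w1) = 1 := by
    rw [map_smul, smul_eq_mul, inv_mul_cancel₀ hw1]
  set z1 : X := (φ1 w1)⁻¹ • w1 with hz1def
  clear_value z1
  obtain ⟨z, hz0, hz2⟩ : ∃ z, φ1 z = 0 ∧ φ2 z ≠ 0 := by
    by_contra h
    push_neg at h
    apply hφ2p
    refine Submodule.mem_span_singleton.2 ⟨φ2 z1, ?_⟩
    apply LinearMap.ext
    intro y
    have hker : φ1 (y - φ1 y • z1) = 0 := by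
      rw [map_sub, map_smul, smul_eq_mul, hz1]; ring
    have h2 := h _ hker
    rw [map_sub, map_smul, smul_eq_mul] at h2
    rw [LinearMap.smul_apply, smul_eq_mul]
    linear_combination -h2
  have hy11 : φ1 ((φ2 z)⁻¹ • z) = 0 := by rw [map_smul, smul_eq_mul, hz0, mul_zero]
  have hy12 : φ2 ((φ2 z)⁻¹ • z) = 1 := by rw [map_smul, smul_eq_mul, inv_mul_cancel₀ hz2]
  set y1 : X := (φ2 z)⁻¹ • z with hy1def
  clear_value y1
  have hy01 : φ1 (z1 - φ2 z1 • y1) = 1 := by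
    rw [map_sub, map_smul, smul_eq_mul, hz1, hy11]; ring
  have hy02 : φ2 (z1 - φ2 z1 • y1) = 0 := by
    rw [map_sub, map_smul, smul_eq_mul, hy12]; ring
  set y0 : X := z1 - φ2 z1 • y1 with hy0def
  clear_value y0
  -- the scalar cocycle functions
  set Λ : ℝ≥0 → ℂ := fun t => φ1 (T t y0) with hΛdef
  set M : ℝ≥0 → ℂ := fun t => φ2 (T t y1) with hMdef
  set C : ℝ≥0 → ℂ := fun t => φ2 (T t y0) with hCdef
  clear_value Λ M C
  have key1 : ∀ t y, φ1 (T t y) = Λ t * φ1 y := by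
    intro t y
    obtain ⟨a, ha⟩ := H1 t
    have h0 : Λ t = a := by
      simp only [hΛdef]
      rw [ha y0, hy01, mul_one]
    rw [h0]
    exact ha y
  have key2 : ∀ t y, φ2 (T t y) = M t * φ2 y + C t * φ1 y := by
    intro t y
    obtain ⟨b, c, hbc⟩ := H2 t
    have hM : M t = b := by
      simp only [hMdef]
      rw [hbc y1, hy12, hy11]; ring
    have hC : C t = c := by
      simp only [hCdef]
      rw [hbc y0, hy02, hy01]; ring
    rw [hM, hC]
    exact hbc y
  have hTapp : ∀ t s (y : X), T (t + s) y = T t (T s y) := by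
    intro t s y; rw [hTadd t s]; rfl
  have hΛc : Continuous Λ := by rw [hΛdef]; exact hφ1c.comp (hTcont y0)
  have hMc : Continuous M := by rw [hMdef]; exact hφ2c.comp (hTcont y1)
  have hΛ0 : Λ 0 = 1 := by simp only [hΛdef]; rw [hT0]; exact hy01
  have hM0 : M 0 = 1 := by simp only [hMdef]; rw [hT0]; exact hy12
  have happΛ : ∀ u, Λ u = φ1 (T u y0) := fun u => by rw [hΛdef]
  have happM : ∀ u, M u = φ2 (T u y1) := fun u => by rw [hMdef]
  have hΛm : ∀ s t, Λ (s + t) = Λ s * Λ t := by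
    intro s t
    rw [happΛ (s + t), hTapp s t y0, key1 s (T t y0), ← happΛ t]
  have hMm : ∀ s t, M (s + t) = M s * M t := by
    intro s t
    rw [happM (s + t), hTapp s t y1, key2 s (T t y1), key1 t y1, hy11, mul_zero,
      mul_zero, add_zero, ← happM t]
  have hΛne : ∀ t, Λ t ≠ 0 := mult_ne_zero Λ hΛc hΛ0 hΛm
  have hMne : ∀ t, M t ≠ 0 := mult_ne_zero M hMc hM0 hMm
  by_cases ha : φ1 x = 0
  · -- the orbit lies in the closed proper subspace ker φ1
    have hsub : {y : X | ∃ α : ℂ, ‖α‖ ≤ 1 ∧ ∃ t : ℝ≥0, y = α • T t x} ⊆ φ1 ⁻¹' {0} := by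
      rintro y ⟨α, hα, t, rfl⟩
      simp only [Set.mem_preimage, Set.mem_singleton_iff, map_smul, smul_eq_mul]
      rw [key1 t x, ha]
      ring
    have hcl : IsClosed (φ1 ⁻¹' {0}) := isClosed_singleton.preimage hφ1c
    have h1 := closure_minimal hsub hcl (hD y0)
    simp only [Set.mem_preimage, Set.mem_singleton_iff] at h1
    rw [hy01] at h1
    exact one_ne_zero h1
  · -- the main case
    set F : ℝ≥0 → ℂ := fun t => φ2 (T t x) / (Λ t * φ1 x) with hFdef
    clear_value F
    have hden : ∀ t, Λ t * φ1 x ≠ 0 := fun t => mul_ne_zero (hΛne t) ha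
    have hFc : Continuous F := by
      rw [hFdef]
      exact (hφ2c.comp (hTcont x)).div (hΛc.mul continuous_const) hden
    -- density of the orbit forces F to have dense range
    have DF : ∀ z : ℂ, ∀ ε : ℝ, 0 < ε → ∃ t, ‖F t - z‖ < ε := by
      intro z ε hε
      have habsz : (0:ℝ) < 1 + ‖z‖ := by positivity
      set δ : ℝ := min (1/2) (ε / (2 * (1 + ‖z‖))) with hδdef
      have hδpos : 0 < δ := lt_min (by norm_num) (by positivity)
      have hδhalf : δ ≤ 1/2 := min_le_left _ _
      set U : Set X := φ1 ⁻¹' Metric.ball (1:ℂ) δ ∩ φ2 ⁻¹' Metric.ball z δ with hUdef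
      have hUopen : IsOpen U :=
        (Metric.isOpen_ball.preimage hφ1c).inter (Metric.isOpen_ball.preimage hφ2c)
      have hUne : U.Nonempty := by
        refine ⟨y0 + z • y1, ?_, ?_⟩
        · simp only [Set.mem_preimage, map_add, map_smul, smul_eq_mul, hy01, hy11,
            Metric.mem_ball]
          rw [mul_zero, add_zero]
          simpa using hδpos
        · simp only [Set.mem_preimage, map_add, map_smul, smul_eq_mul, hy02, hy12,
            Metric.mem_ball]
          rw [mul_one, zero_add]
          simpa using hδpos
      obtain ⟨y, hyS, hyU⟩ := hD.exists_mem_open hUopen hUne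
      obtain ⟨α, hα, t, rfl⟩ := hyS
      have hp : ‖α * (Λ t * φ1 x) - 1‖ < δ := by
        have h1 : φ1 (α • T t x) = α * (Λ t * φ1 x) := by
          rw [map_smul, smul_eq_mul, key1]
        have h2 := hyU.1
        simp only [Set.mem_preimage, Metric.mem_ball, Complex.dist_eq, h1] at h2
        simpa [Complex.dist_eq] using h2
      have hq : ‖α * φ2 (T t x) - z‖ < δ := by
        have h1 : φ2 (α • T t x) = α * φ2 (T t x) := by rw [map_smul, smul_eq_mul]
        have h2 := hyU.2
        simp only [Set.mem_preimage, Metric.mem_ball, Complex.dist_eq, h1] at h2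
        simpa [Complex.dist_eq] using h2
      set p : ℂ := α * (Λ t * φ1 x) with hpdef
      set q : ℂ := α * φ2 (T t x) with hqdef
      have hpl : (1:ℝ)/2 ≤ ‖p‖ := by
        have h1 : ‖(1:ℂ)‖ - ‖p‖ ≤ ‖(1:ℂ) - p‖ := norm_sub_norm_le _ _
        rw [norm_one, norm_sub_rev] at h1
        linarith
      have hppos : (0:ℝ) < ‖p‖ := by linarith
      have hpne : p ≠ 0 := by
        intro h; rw [h, norm_zero] at hppos; exact lt_irrefl _ hppos
      have hαne : α ≠ 0 := by
        intro h
        apply hpne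
        rw [hpdef, h, zero_mul]
      refine ⟨t, ?_⟩
      have hFt : F t = q / p := by
        simp only [hFdef, hqdef, hpdef]
        rw [mul_div_mul_left _ _ hαne]
      have hformula : F t - z = (q - z * p) / p := by
        rw [hFt]
        field_simp
      have hnum : ‖q - z * p‖ < δ * (1 + ‖z‖) := by
        have h2 : q - z * p = (q - z) - z * (p - 1) := by ring
        calc ‖q - z * p‖ = ‖(q - z) - z * (p - 1)‖ := by rw [h2]
          _ ≤ ‖q - z‖ + ‖z * (p - 1)‖ := norm_sub_le _ _
          _ = ‖q - z‖ + ‖z‖ * ‖p - 1‖ := by rw [norm_mul]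
          _ < δ + ‖z‖ * δ := by
              have h3 := mul_le_mul_of_nonneg_left hp.le (norm_nonneg z)
              have h4 : ‖z‖ * δ ≤ ‖z‖ * δ := le_refl _
              have h5 : 0 ≤ ‖z‖ := norm_nonneg z
              nlinarith [hq, hp]
          _ = δ * (1 + ‖z‖) := by ring
      have h6 : ‖F t - z‖ = ‖q - z * p‖ / ‖p‖ := by rw [hformula, norm_div]
      have h7 : ‖q - z * p‖ / ‖p‖ ≤ ‖q - z * p‖ / (1/2) :=
        div_le_div_of_nonneg_left (norm_nonneg _) (by norm_num) hpl
      have h8 : ‖q - z * p‖ / (1/2) = 2 * ‖q - z * p‖ := by ring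
      have hδ2 : δ ≤ ε / (2 * (1 + ‖z‖)) := min_le_right _ _
      have h9 := mul_le_mul_of_nonneg_right hδ2 habsz.le
      have h10 : ε / (2 * (1 + ‖z‖)) * (1 + ‖z‖) = ε / 2 := by
        field_simp
      rw [h6]
      nlinarith [hnum]
    -- the affine cocycle structure of F
    set A : ℝ≥0 → ℂ := fun t => M t / Λ t with hAdef
    clear_value A
    have hAne : ∀ t, A t ≠ 0 := by
      intro t
      simp only [hAdef]
      exact div_ne_zero (hMne t) (hΛne t)
    have hfe : ∀ t s, F (t + s) = A t * F s + C t / Λ t := by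
      intro t s
      simp only [hFdef, hAdef]
      rw [hTapp t s x, key2 t (T s x), key1 s x, hΛm t s]
      field_simp [hΛne t, hΛne s, ha]
    set G : ℝ≥0 → ℂ := fun t => F t - F 0 with hGdef
    clear_value G
    have hB : ∀ t, C t / Λ t = F t - A t * F 0 := by
      intro t
      have h1 := hfe t 0
      rw [add_zero] at h1
      linear_combination -h1
    have hGfe : ∀ t s, G (t + s) = A t * G s + G t := by
      intro t s
      simp only [hGdef]
      rw [hfe t s, hB t]
      ring
    by_cases hA1 : ∀ t, A t = 1
    · -- G is additive, so F is an affine ray: not dense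
      have hGadd : ∀ s t, G (s + t) = G s + G t := by
        intro s t
        rw [hGfe s t, hA1 s]
        ring
      have hGc : Continuous G := by rw [hGdef]; exact hFc.sub continuous_const
      have hGlin := additive_linear G hGc hGadd
      by_cases hG1 : G 1 = 0
      · obtain ⟨t, ht⟩ := DF (F 0 + 1) (1/2) (by norm_num)
        have hFt : F t = F 0 := by
          have h1 := hGlin t
          rw [hG1, mul_zero] at h1
          simp only [hGdef] at h1
          exact sub_eq_zero.1 h1
        rw [hFt, show F 0 - (F 0 + 1) = -1 from by ring, norm_neg, norm_one] at ht
        linarith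
      · obtain ⟨t, ht⟩ := DF (F 0 - G 1) ‖G 1‖ (norm_pos_iff.2 hG1)
        have h1 : F t - (F 0 - G 1) = (((t:ℝ) + 1 : ℝ):ℂ) * G 1 := by
          have h2 := hGlin t
          have h3 : G t = F t - F 0 := by rw [hGdef]
          push_cast
          linear_combination h2 - h3
        rw [h1, norm_mul] at ht
        have hnr : ‖((((t:ℝ) + 1 : ℝ)) : ℂ)‖ = (t:ℝ) + 1 := by
          rw [Complex.norm_real]
          exact abs_of_nonneg (by positivity)
        rw [hnr] at ht
        nlinarith [norm_nonneg (G 1), t.coe_nonneg, norm_pos_iff.2 hG1]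
    · -- G t = κ (A t - 1), so the range of A is dense: impossible by modulus
      push_neg at hA1
      obtain ⟨t0, ht0⟩ := hA1
      have hsub0 : A t0 - 1 ≠ 0 := sub_ne_zero.2 ht0
      have hsym : ∀ t, G t * (A t0 - 1) = G t0 * (A t - 1) := by
        intro t
        have h1 := hGfe t t0
        have h2 := hGfe t0 t
        rw [add_comm t t0] at h1
        rw [h1] at h2
        linear_combination -h2
      set κ : ℂ := G t0 / (A t0 - 1) with hκdef
      clear_value κ
      have hGk : ∀ t, G t = κ * (A t - 1) := by
        intro t
        have h1 := hsym t
        rw [hκdef]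
        field_simp [hsub0]
        linear_combination h1
      by_cases hκ0 : κ = 0
      · obtain ⟨t, ht⟩ := DF (F 0 + 1) (1/2) (by norm_num)
        have hFt : F t = F 0 := by
          have h1 := hGk t
          rw [hκ0, zero_mul] at h1
          simp only [hGdef] at h1
          exact sub_eq_zero.1 h1
        rw [hFt, show F 0 - (F 0 + 1) = -1 from by ring, norm_neg, norm_one] at ht
        linarith
      · have hκpos : (0:ℝ) < ‖κ‖ := norm_pos_iff.2 hκ0
        have DA : ∀ w : ℂ, ∀ ε : ℝ, 0 < ε → ∃ t, ‖A t - w‖ < ε := by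
          intro w ε hε
          obtain ⟨t, ht⟩ := DF (F 0 + κ * (w - 1)) (ε * ‖κ‖) (mul_pos hε hκpos)
          refine ⟨t, ?_⟩
          have h1 : A t - w = (F t - (F 0 + κ * (w - 1))) / κ := by
            have h2 := hGk t
            have h3 : G t = F t - F 0 := by rw [hGdef]
            rw [h3] at h2
            field_simp [hκ0]
            linear_combination -h2
          rw [h1, norm_div, div_lt_iff₀ hκpos]
          exact ht
        have hA0 : A 0 = 1 := by
          simp only [hAdef]
          rw [hΛ0, hM0]
          norm_num
        have hAm : ∀ s t, A (s + t) = A s * A t := by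
          intro s t
          simp only [hAdef]
          rw [hΛm s t, hMm s t]
          field_simp
        have hAc : Continuous A := by
          simp only [hAdef]
          exact hMc.div hΛc hΛne
        have hhadd : ∀ s t,
            Real.log ‖A (s + t)‖ = Real.log ‖A s‖ + Real.log ‖A t‖ := by
          intro s t
          rw [hAm s t, norm_mul,
            Real.log_mul (norm_ne_zero_iff.2 (hAne s)) (norm_ne_zero_iff.2 (hAne t))]
        have hhc : Continuous fun t => ((Real.log ‖A t‖ : ℝ) : ℂ) := by
          apply Complex.continuous_ofReal.comp
          apply continuous_iff_continuousAt.2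
          intro t
          have hlg : ContinuousAt Real.log ‖A t‖ :=
            Real.continuousAt_log (norm_ne_zero_iff.2 (hAne t))
          have h2 : ContinuousAt (fun u : ℝ≥0 => ‖A u‖) t := hAc.norm.continuousAt
          exact ContinuousAt.comp (f := fun u : ℝ≥0 => ‖A u‖) (x := t) hlg h2
        have hhlin := additive_linear (fun t => ((Real.log ‖A t‖ : ℝ) : ℂ)) hhc
          (fun s t => by
            show ((Real.log ‖A (s + t)‖ : ℝ) : ℂ) =
              ((Real.log ‖A s‖ : ℝ) : ℂ) + ((Real.log ‖A t‖ : ℝ) : ℂ)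
            rw [hhadd s t]
            push_cast
            ring)
        have hhlin' : ∀ t : ℝ≥0, Real.log ‖A t‖ = (t:ℝ) * Real.log ‖A 1‖ := by
          intro t
          have h1 := hhlin t
          exact_mod_cast h1
        have habs : ∀ t : ℝ≥0, ‖A t‖ = Real.exp ((t:ℝ) * Real.log ‖A 1‖) := by
          intro t
          rw [← hhlin' t, Real.exp_log (norm_pos_iff.2 (hAne t))]
        rcases le_or_gt 0 (Real.log ‖A 1‖) with hh1 | hh1
        · obtain ⟨t, ht⟩ := DA 0 (1/2) (by norm_num)
          rw [sub_zero] at ht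
          have h1 : (1:ℝ) ≤ ‖A t‖ := by
            rw [habs t]
            exact Real.one_le_exp (by positivity)
          linarith
        · obtain ⟨t, ht⟩ := DA 2 (1/2) (by norm_num)
          have h1 : ‖A t‖ ≤ 1 := by
            rw [habs t]
            exact Real.exp_le_one_iff.2 (mul_nonpos_of_nonneg_of_nonpos t.coe_nonneg hh1.le)
          have h2 : (2:ℝ) ≤ ‖A t‖ + ‖A t - 2‖ := by
            calc (2:ℝ) = ‖(2:ℂ)‖ := by norm_num
              _ = ‖A t - (A t - 2)‖ := by ring_nf
              _ ≤ ‖A t‖ + ‖A t - 2‖ := norm_sub_le _ _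
          linarith
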